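/- The reachability graph of a DAW-net is identical to the reachability graph of its finite (active-domain) version: restricting each variable's domain to its active domain (the union over all transitions of the values the transition can write) does not change the set of reachable states or the transition relation of the reachability graph. -/
import Mathlib


/-- A DAW-net. -/
structure DAWNet (P T V O : Type) where
  pre : T → Set P
  post : T → Set P
  wr : T → V → Option (Set O)
  gd : T → ((V → Option O) → Prop)

/-- Valid firing of a transition `t` from state `(M, η)` to state `(M', η')`. -/
def ValidFiring {P T V O : Type} (W : DAWNet P T V O)
    (M : P → ℕ) (η : V → Option O) (t : T) (M' : P → ℕ) (η' : V → Option O) : Prop :=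
  (∀ p ∈ W.pre t, 0 < M p) ∧
  W.gd t η ∧
  (∀ p, (p ∈ W.pre t ∧ p ∉ W.post t → M' p = M p - 1) ∧
        (p ∈ W.post t ∧ p ∉ W.pre t → M' p = M p + 1) ∧
        ((p ∈ W.pre t ↔ p ∈ W.post t) → M' p = M p)) ∧
  (∀ v (s : Set O), W.wr t v = some s →
      (s = ∅ → η' v = none) ∧ (s.Nonempty → ∃ o ∈ s, η' v = some o)) ∧
  (∀ v, W.wr t v = none → η' v = η v)

/-- One step of the reachability graph: some transition admits a valid firing. -/
def stepRel {P T V O : Type} (W : DAWNet P T V O)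
    (s s' : (P → ℕ) × (V → Option O)) : Prop :=
  ∃ t, ValidFiring W s.1 s.2 t s'.1 s'.2

/-- An assignment takes values in the active domain: every value it assigns can be
written by some transition (`adm v = ⋃_{t} wr t v`). -/
def admissible {P T V O : Type} (W : DAWNet P T V O) (η : V → Option O) : Prop :=
  ∀ v o, η v = some o → ∃ (t : T) (s : Set O), W.wr t v = some s ∧ o ∈ s

/-- A step of the finite (active-domain) version of the net: the same valid firings,
between states whose assignments take values in the active domains. -/
def stepRelFin {P T V O : Type} (W : DAWNet P T V O)
    (s s' : (P → ℕ) × (V → Option O)) : Prop :=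
  stepRel W s s' ∧ admissible W s.2 ∧ admissible W s'.2


lemma admissible_step {P T V O : Type} (W : DAWNet P T V O)
    {M : P → ℕ} {η : V → Option O} {t : T} {M' : P → ℕ} {η' : V → Option O}
    (h : ValidFiring W M η t M' η') (hη : admissible W η) : admissible W η' := by
  intro v o hvo
  cases hw : W.wr t v with
  | none => exact hη v o ((h.2.2.2.2 v hw) ▸ hvo)
  | some s =>
    rcases h.2.2.2.1 v s hw with ⟨he, hne⟩
    rcases Set.eq_empty_or_nonempty s with rfl | hs
    · simp [he rfl] at hvo
    · rcases hne hs with ⟨o', ho', heq⟩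
      rw [hvo] at heq
      obtain rfl := Option.some.inj heq
      exact ⟨t, s, hw, ho'⟩

lemma admissible_reach {P T V O : Type} (W : DAWNet P T V O) (M0 : P → ℕ)
    {s : (P → ℕ) × (V → Option O)}
    (h : Relation.ReflTransGen (stepRel W) ((M0, fun _ => none)) s) :
    admissible W s.2 := by
  induction h with
  | refl => intro v o hv; simp at hv
  | tail _ hstep ih => rcases hstep with ⟨t, hf⟩; exact admissible_step W hf ih

/-- The reachability graph of a DAW-net is identical to the reachability graph of its
finite (active-domain) version: starting from the initial state (whose assignment is
empty), the reachable states coincide, and on reachable states the transition relations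
coincide. -/
theorem finite_version_same_reachability_graph {P T V O : Type}
    (W : DAWNet P T V O) (M0 : P → ℕ) :
    ({s | Relation.ReflTransGen (stepRel W)
        ((M0, fun _ => none) : (P → ℕ) × (V → Option O)) s} =
      {s | Relation.ReflTransGen (stepRelFin W)
        ((M0, fun _ => none) : (P → ℕ) × (V → Option O)) s}) ∧
    (∀ (s s' : (P → ℕ) × (V → Option O)) (t : T),
      Relation.ReflTransGen (stepRel W)
        ((M0, fun _ => none) : (P → ℕ) × (V → Option O)) s →
      (ValidFiring W s.1 s.2 t s'.1 s'.2 ↔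
        (ValidFiring W s.1 s.2 t s'.1 s'.2 ∧ admissible W s.2 ∧ admissible W s'.2))) := by
  constructor
  · ext s
    simp only [Set.mem_setOf_eq]
    constructor
    · intro h
      induction h with
      | refl => exact Relation.ReflTransGen.refl
      | @tail b c hab hbc ih =>
        exact ih.tail ⟨hbc, admissible_reach W M0 hab,
          admissible_reach W M0 (hab.tail hbc)⟩
    · intro h
      induction h with
      | refl => exact Relation.ReflTransGen.refl
      | tail _ hbc ih => exact ih.tail hbc.1
  · intro s s' t hreach
    constructor
    · intro hf
      exact ⟨hf, admissible_reach W M0 hreach,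
        admissible_reach W M0 (hreach.tail ⟨t, hf⟩)⟩
    · intro h; exact h.1
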